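/- Define g : ℕ₀ × (0,∞) → ℝ by g(m,r) = 2r^{2m+1}e^{−r²}/m! and H : ℝ^k → ℝ by H(x₁,…,x_k) = (2/π)^{k/2} e^{−2(x₁²+⋯+x_k²)}. Then for every ε > 0 there exists N such that for all m₁,…,m_k ∈ ℕ₀ with m_i > N for every i = 1,…,k, ∫_{(0,∞)^k} |∏_{i=1}^k g(m_i,r_i) − H(√m₁ − r₁,…,√m_k − r_k)| dr₁⋯dr_k < ε. -/

import Mathlib

open MeasureTheory Real Filter Set Topology


lemma abs_sub_min' (a b : ℝ) : |a - b| = a + b - 2 * min a b := by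
  rcases le_total a b with h | h
  · rw [abs_of_nonpos (by linarith), min_eq_left h]; ring
  · rw [abs_of_nonneg (by linarith), min_eq_right h]; ring

lemma prod_sub_prod_abs_le {ι : Type*} [DecidableEq ι] (s : Finset ι) (f g : ι → ℝ)
    (hf : ∀ i, 0 ≤ f i) (hg : ∀ i, 0 ≤ g i) :
    |∏ i ∈ s, f i - ∏ i ∈ s, g i| ≤
      ∑ j ∈ s, |f j - g j| * ∏ i ∈ s.erase j, (f i + g i) := by
  induction s using Finset.induction_on with
  | empty => simp
  | @insert a s ha ih =>
    rw [Finset.prod_insert ha, Finset.prod_insert ha, Finset.sum_insert ha,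
      Finset.erase_insert ha]
    have key : |f a * ∏ i ∈ s, f i - g a * ∏ i ∈ s, g i| ≤
        f a * |∏ i ∈ s, f i - ∏ i ∈ s, g i| + |f a - g a| * ∏ i ∈ s, g i := by
      have : f a * ∏ i ∈ s, f i - g a * ∏ i ∈ s, g i =
          f a * (∏ i ∈ s, f i - ∏ i ∈ s, g i) + (f a - g a) * ∏ i ∈ s, g i := by ring
      rw [this]
      refine (abs_add_le _ _).trans ?_
      rw [abs_mul, abs_mul, abs_of_nonneg (hf a),
        abs_of_nonneg (Finset.prod_nonneg fun i _ => hg i)]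
    refine key.trans ?_
    have h1 : ∏ i ∈ s, g i ≤ ∏ i ∈ s, (f i + g i) :=
      Finset.prod_le_prod (fun i _ => hg i) (fun i _ => le_add_of_nonneg_left (hf i))
    have h2 : f a * |∏ i ∈ s, f i - ∏ i ∈ s, g i| ≤
        ∑ j ∈ s, |f j - g j| * ((f a + g a) * ∏ i ∈ s.erase j, (f i + g i)) := by
      calc f a * |∏ i ∈ s, f i - ∏ i ∈ s, g i|
          ≤ (f a + g a) * (∑ j ∈ s, |f j - g j| * ∏ i ∈ s.erase j, (f i + g i)) := by
            apply mul_le_mul (le_add_of_nonneg_right (hg a)) ih (abs_nonneg _)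
              (by have := hf a; have := hg a; positivity)
        _ = _ := by rw [Finset.mul_sum]; apply Finset.sum_congr rfl; intros; ring
    have h3 : ∀ j ∈ s, |f j - g j| * ((f a + g a) * ∏ i ∈ s.erase j, (f i + g i)) =
        |f j - g j| * ∏ i ∈ (insert a s).erase j, (f i + g i) := by
      intro j hj
      rw [Finset.erase_insert_of_ne (by rintro rfl; exact ha hj : a ≠ j),
        Finset.prod_insert (fun h => ha (Finset.mem_of_mem_erase h))]
    calc f a * |∏ i ∈ s, f i - ∏ i ∈ s, g i| + |f a - g a| * ∏ i ∈ s, g i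
        ≤ (∑ j ∈ s, |f j - g j| * ((f a + g a) * ∏ i ∈ s.erase j, (f i + g i)))
          + |f a - g a| * ∏ i ∈ s, (f i + g i) := by
          exact add_le_add h2 (mul_le_mul_of_nonneg_left h1 (abs_nonneg _))
      _ = |f a - g a| * ∏ i ∈ s, (f i + g i)
          + ∑ j ∈ s, |f j - g j| * ∏ i ∈ (insert a s).erase j, (f i + g i) := by
          rw [Finset.sum_congr rfl h3]; ring


lemma sqrt_nat_tendsto : Tendsto (fun M : ℕ => Real.sqrt M) atTop atTop := by
  have : Real.sqrt = fun x : ℝ => x ^ (1/2 : ℝ) := funext fun x => Real.sqrt_eq_rpow x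
  rw [this]
  exact (tendsto_rpow_atTop (by norm_num)).comp tendsto_natCast_atTop_atTop

lemma loglim (x : ℝ) :
    Tendsto (fun M : ℕ => (2*(M:ℝ)+1) * Real.log (1 + x / Real.sqrt M) - 2 * Real.sqrt M * x)
      atTop (𝓝 (-x^2)) := by
  have hC : Tendsto (fun M : ℕ => (|x| + x^2 + 6*|x|^3) / Real.sqrt M) atTop (𝓝 0) :=
    tendsto_const_nhds.div_atTop sqrt_nat_tendsto
  have hev : ∀ᶠ M : ℕ in atTop,
      |((2*(M:ℝ)+1) * Real.log (1 + x / Real.sqrt M) - 2 * Real.sqrt M * x) + x^2|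
        ≤ (|x| + x^2 + 6*|x|^3) / Real.sqrt M := by
    filter_upwards [sqrt_nat_tendsto.eventually_ge_atTop (2*|x|+1)] with M hM
    set s := Real.sqrt M with hs
    have hs1 : (1:ℝ) ≤ s := by have := abs_nonneg x; linarith
    have hs0 : (0:ℝ) < s := by linarith
    have hMs : (M:ℝ) = s^2 := (Real.sq_sqrt (Nat.cast_nonneg M)).symm
    have hxs : 2*|x| ≤ s := by linarith
    have hxs2 : |x|/s ≤ 1/2 := by rw [div_le_iff₀ hs0]; linarith
    have hx1 : |(-x/s)| < 1 := by
      rw [abs_div, abs_neg, abs_of_pos hs0]; linarith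
    have key := Real.abs_log_sub_add_sum_range_le hx1 2
    set δ : ℝ := Real.log (1 + x/s) - x/s + x^2/(2*M) with hδ
    have hδeq : δ = (∑ i ∈ Finset.range 2, (-x/s) ^ (i + 1) / (i + 1)) + Real.log (1 - (-x/s)) := by
      rw [hδ, hMs]
      simp only [Finset.sum_range_succ, Finset.sum_range_zero]
      push_cast
      rw [neg_div, sub_neg_eq_add]
      field_simp
      ring
    have hδb : |δ| ≤ 2*|x|^3/s^3 := by
      rw [hδeq]
      refine key.trans ?_
      have h1 : |(-x/s)| = |x|/s := by rw [abs_div, abs_neg, abs_of_pos hs0]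
      rw [h1]
      have h2 : (1:ℝ)/2 ≤ 1 - |x|/s := by linarith
      have h3 : (|x|/s)^(2+1) = |x|^3/s^3 := by rw [div_pow]
      rw [h3]
      calc |x|^3/s^3 / (1 - |x|/s) ≤ |x|^3/s^3 / (1/2) :=
            div_le_div_of_nonneg_left (by positivity) (by norm_num) h2
        _ = 2*|x|^3/s^3 := by ring
    have hlog : Real.log (1 + x/s) = x/s - x^2/(2*M) + δ := by rw [hδ]; ring
    have heq : ((2*(M:ℝ)+1) * Real.log (1 + x / s) - 2 * s * x) + x^2
        = x/s - x^2/(2*M) + (2*M+1)*δ := by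
      rw [hlog, hMs]
      field_simp
      ring
    rw [heq]
    have habs : |x/s - x^2/(2*(M:ℝ)) + (2*M+1)*δ| ≤ |x|/s + x^2/(2*M) + (2*M+1)*(2*|x|^3/s^3) := by
      refine (abs_add_le _ _).trans (add_le_add ((abs_sub _ _).trans (add_le_add ?_ ?_)) ?_)
      · rw [abs_div, abs_of_pos hs0]
      · rw [abs_div, abs_of_nonneg (by positivity : (0:ℝ) ≤ x^2),
          abs_of_pos (show (0:ℝ) < 2*(M:ℝ) from by rw [hMs]; positivity)]
      · rw [abs_mul]
        refine mul_le_mul ?_ hδb (abs_nonneg _) (by rw [hMs]; positivity)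
        rw [abs_of_pos (by rw [hMs]; positivity)]
    refine habs.trans ?_
    rw [hMs]
    rw [show (|x| + x^2 + 6*|x|^3)/s = |x|/s + x^2/s + 6*|x|^3/s from by ring]
    refine add_le_add (add_le_add le_rfl ?_) ?_
    · rw [div_le_div_iff₀ (by positivity) hs0]
      have h2s : s ≤ 2*s^2 := by nlinarith [mul_nonneg (by linarith : (0:ℝ) ≤ s) (by linarith : (0:ℝ) ≤ s - 1)]
      exact mul_le_mul_of_nonneg_left h2s (sq_nonneg x)
    · rw [show (2*s^2+1)*(2*|x|^3/s^3) = ((2*s^2+1)*(2*|x|^3))/s^3 from by ring,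
        div_le_div_iff₀ (by positivity) hs0]
      have hs2 : (1:ℝ) ≤ s^2 := by nlinarith
      have hA : 0 ≤ |x|^3*s*(s^2-1) :=
        mul_nonneg (mul_nonneg (pow_nonneg (abs_nonneg x) 3) hs0.le) (by linarith)
      nlinarith [hA]
  have h0 : Tendsto (fun M : ℕ =>
      ((2*(M:ℝ)+1) * Real.log (1 + x / Real.sqrt M) - 2 * Real.sqrt M * x) + x^2)
      atTop (𝓝 0) := squeeze_zero_norm' (by simpa using hev) hC
  have := h0.sub (tendsto_const_nhds : Tendsto _ _ (𝓝 (x^2)))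
  simpa using this


noncomputable def gfun (M : ℕ) : ℝ → ℝ :=
  fun r => 2 * r ^ (2*M+1) * Real.exp (-r^2) / (Nat.factorial M : ℝ)

noncomputable def Gfun (M : ℕ) : ℝ → ℝ := (Set.Ioi (0:ℝ)).indicator (gfun M)

noncomputable def hfun (M : ℕ) : ℝ → ℝ :=
  fun r => Real.sqrt (2/Real.pi) * Real.exp (-2*(Real.sqrt M - r)^2)

lemma gfun_nonneg (M : ℕ) (r : ℝ) (hr : 0 ≤ r) : 0 ≤ gfun M r := by
  unfold gfun; positivity

lemma Gfun_nonneg (M : ℕ) (r : ℝ) : 0 ≤ Gfun M r := by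
  unfold Gfun
  by_cases h : r ∈ Set.Ioi (0:ℝ)
  · rw [indicator_of_mem h]; exact gfun_nonneg M r h.le
  · rw [indicator_of_notMem h]

lemma hfun_nonneg (M : ℕ) (r : ℝ) : 0 ≤ hfun M r := by unfold hfun; positivity

lemma gfun_measurable (M : ℕ) : Measurable (gfun M) := by
  unfold gfun; fun_prop

lemma Gfun_measurable (M : ℕ) : Measurable (Gfun M) :=
  (gfun_measurable M).indicator measurableSet_Ioi

lemma hfun_continuous (M : ℕ) : Continuous (hfun M) := by unfold hfun; fun_prop

lemma gfun_integrableOn (M : ℕ) : IntegrableOn (gfun M) (Set.Ioi 0) := by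
  have h := integrableOn_rpow_mul_exp_neg_mul_sq one_pos
    (s := ((2*M+1:ℕ):ℝ)) (lt_of_lt_of_le (by norm_num) (Nat.cast_nonneg _))
  have h2 := h.const_mul (2 / (Nat.factorial M : ℝ))
  refine (integrableOn_congr_fun ?_ measurableSet_Ioi).mp h2
  intro x hx
  unfold gfun
  simp only [Real.rpow_natCast]
  have : (Nat.factorial M : ℝ) ≠ 0 := Nat.cast_ne_zero.mpr (Nat.factorial_ne_zero M)
  field_simp

lemma Gfun_integrable (M : ℕ) : Integrable (Gfun M) :=
  (integrable_indicator_iff measurableSet_Ioi).mpr (gfun_integrableOn M)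

lemma I1 (M : ℕ) :
    ∫ r in Set.Ioi (0:ℝ), 2 * r ^ (2*M+1) * Real.exp (-r^2) = (Nat.factorial M : ℝ) := by
  have h := integral_comp_rpow_Ioi_of_pos
    (g := fun y : ℝ => y ^ M * Real.exp (-y)) (p := 2) two_pos
  have h2 : (Nat.factorial M : ℝ) = ∫ y in Set.Ioi (0:ℝ), y ^ M * Real.exp (-y) := by
    rw [← Real.Gamma_nat_eq_factorial, Real.Gamma_eq_integral (by positivity)]
    refine setIntegral_congr_fun measurableSet_Ioi fun x hx => ?_
    rw [show ((M:ℝ)+1-1) = (M:ℝ) from by ring, Real.rpow_natCast]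
    ring
  rw [h2, ← h]
  refine setIntegral_congr_fun measurableSet_Ioi fun x hx => ?_
  simp only [smul_eq_mul]
  rw [show ((2:ℝ)-1) = 1 from by norm_num, Real.rpow_one,
    show x ^ (2:ℝ) = x^2 from by rw [show (2:ℝ) = ((2:ℕ):ℝ) from by norm_num, Real.rpow_natCast],
    ← pow_mul]
  ring

lemma Gfun_integral (M : ℕ) : ∫ r, Gfun M r = 1 := by
  unfold Gfun
  rw [integral_indicator measurableSet_Ioi]
  unfold gfun
  rw [integral_div, I1, div_self (Nat.cast_ne_zero.mpr (Nat.factorial_ne_zero M))]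

lemma hfun_integrable (M : ℕ) : Integrable (hfun M) := by
  have h1 : Integrable (fun r : ℝ => Real.exp (-2*r^2)) := integrable_exp_neg_mul_sq two_pos
  have h2 := h1.comp_sub_right (Real.sqrt M)
  have h3 : (fun r : ℝ => Real.exp (-2*(r - Real.sqrt M)^2))
      = fun r : ℝ => Real.exp (-2*(Real.sqrt M - r)^2) := by
    funext r
    rw [show (Real.sqrt M - r) = -(r - Real.sqrt M) from by ring, neg_sq]
  unfold hfun
  exact ((h3 ▸ h2).const_mul _)

lemma hfun_integral (M : ℕ) : ∫ r, hfun M r = 1 := by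
  unfold hfun
  rw [integral_const_mul]
  have h3 : (fun r : ℝ => Real.exp (-2*(Real.sqrt M - r)^2))
      = fun r : ℝ => Real.exp (-2*(r - Real.sqrt M)^2) := by
    funext r
    rw [show (Real.sqrt M - r) = -(r - Real.sqrt M) from by ring, neg_sq]
  rw [h3, integral_sub_right_eq_self (fun r : ℝ => Real.exp (-2*r^2)) (Real.sqrt M),
    integral_gaussian, ← Real.sqrt_mul (by positivity),
    show (2/Real.pi)*(Real.pi/2) = 1 from by field_simp, Real.sqrt_one]

lemma pointlim (x : ℝ) :
    Tendsto (fun M : ℕ => Gfun M (Real.sqrt M + x)) atTop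
      (𝓝 (Real.sqrt (2/Real.pi) * Real.exp (-2*x^2))) := by
  have t1 : Tendsto (fun M : ℕ => Real.sqrt 2 / Stirling.stirlingSeq M) atTop
      (𝓝 (Real.sqrt 2 / Real.sqrt Real.pi)) :=
    tendsto_const_nhds.div Stirling.tendsto_stirlingSeq_sqrt_pi
      (Real.sqrt_pos.mpr Real.pi_pos).ne'
  have t2 : Tendsto (fun M : ℕ => Real.exp
      ((2*(M:ℝ)+1) * Real.log (1 + x / Real.sqrt M) - 2 * Real.sqrt M * x)) atTop
      (𝓝 (Real.exp (-x^2))) :=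
    (Real.continuous_exp.continuousAt.tendsto).comp (loglim x)
  have tF : Tendsto (fun M : ℕ => Real.sqrt 2 / Stirling.stirlingSeq M *
      Real.exp ((2*(M:ℝ)+1) * Real.log (1 + x / Real.sqrt M) - 2 * Real.sqrt M * x) *
      Real.exp (-x^2)) atTop
      (𝓝 (Real.sqrt (2/Real.pi) * Real.exp (-2*x^2))) := by
    have h := (t1.mul t2).mul (tendsto_const_nhds (x := Real.exp (-x^2)))
    have heq : Real.sqrt 2 / Real.sqrt Real.pi * Real.exp (-x^2) * Real.exp (-x^2)
        = Real.sqrt (2/Real.pi) * Real.exp (-2*x^2) := by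
      rw [Real.sqrt_div (by norm_num : (0:ℝ) ≤ 2), mul_assoc, ← Real.exp_add]
      congr 1
      ring
    rwa [heq] at h
  refine Tendsto.congr' ?_ tF
  have hev1 := sqrt_nat_tendsto.eventually_ge_atTop (|x| + 1)
  have hev2 := eventually_ge_atTop 1
  filter_upwards [hev1, hev2] with M hM hM1
  set s := Real.sqrt (M:ℝ) with hs
  have hs0 : 0 < s := lt_of_lt_of_le (by positivity) hM
  have hsx : 0 < s + x := by
    have : -x ≤ |x| := neg_le_abs x
    linarith
  have hy : 0 < 1 + x / s := by
    have h1 : 1 + x / s = (s + x) / s := by field_simp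
    rw [h1]
    exact div_pos hsx hs0
  have hMs : (M:ℝ) = s^2 := (Real.sq_sqrt (Nat.cast_nonneg M)).symm
  have hstir_pos : 0 < Stirling.stirlingSeq M := by
    obtain ⟨n, rfl⟩ : ∃ n, M = n + 1 := ⟨M - 1, (Nat.succ_pred_eq_of_pos hM1).symm⟩
    exact Stirling.stirlingSeq'_pos n
  have hMpos : (0:ℝ) < M := by exact_mod_cast hM1
  have hD : 0 < Real.sqrt (2*M) * ((M:ℝ)/Real.exp 1)^M :=
    mul_pos (Real.sqrt_pos.mpr (by linarith)) (pow_pos (div_pos hMpos (Real.exp_pos 1)) M)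
  have hfact : (Nat.factorial M : ℝ)
      = Stirling.stirlingSeq M * (Real.sqrt (2*M) * ((M:ℝ)/Real.exp 1)^M) := by
    rw [Stirling.stirlingSeq, div_mul_cancel₀ _ hD.ne']
  have hsx_eq : s + x = s * (1 + x/s) := by field_simp
  have hpow : (s+x)^(2*M+1) = (s^2)^M * s * (1 + x/s)^(2*M+1) := by
    rw [hsx_eq, mul_pow, show s^(2*M+1) = (s^2)^M * s from by rw [pow_succ, pow_mul]]
  have hexp1 : (1 + x/s)^(2*M+1) = Real.exp ((2*(M:ℝ)+1) * Real.log (1 + x/s)) := by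
    rw [show (2*(M:ℝ)+1) = ((2*M+1 : ℕ):ℝ) from by push_cast; ring, Real.exp_nat_mul,
      Real.exp_log hy]
  have hexp2 : Real.exp (-(s+x)^2)
      = (Real.exp ((M:ℝ)))⁻¹ * (Real.exp (-(2*s*x)) * Real.exp (-x^2)) := by
    rw [← Real.exp_neg, ← Real.exp_add, ← Real.exp_add]
    congr 1
    rw [hMs]; ring
  have hL : Real.exp ((2*(M:ℝ)+1) * Real.log (1+x/s) - 2*s*x)
      = Real.exp ((2*(M:ℝ)+1) * Real.log (1+x/s)) * Real.exp (-(2*s*x)) := by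
    rw [← Real.exp_add, sub_eq_add_neg]
  have hsqrt2M : Real.sqrt (2*(M:ℝ)) = Real.sqrt 2 * s := by
    rw [Real.sqrt_mul (by norm_num : (0:ℝ) ≤ 2)]
  have hpowM : ((M:ℝ)/Real.exp 1)^M = (s^2)^M / Real.exp (M:ℝ) := by
    rw [div_pow, ← Real.exp_nat_mul, mul_one, hMs]
  have hs2 : Real.sqrt 2 ≠ 0 := by positivity
  have h2s : Real.sqrt 2 / Stirling.stirlingSeq M = 2 / (Real.sqrt 2 * Stirling.stirlingSeq M) := by
    rw [div_eq_div_iff hstir_pos.ne' (mul_ne_zero hs2 hstir_pos.ne'), ← mul_assoc,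
      Real.mul_self_sqrt (by norm_num : (0:ℝ) ≤ 2)]
  unfold Gfun gfun
  rw [indicator_of_mem (mem_Ioi.mpr hsx)]
  rw [hpow, hexp1, hexp2, hL, hfact, hsqrt2M, hpowM, h2s]
  have hE1 : Real.exp ((2*(M:ℝ)+1) * Real.log (1+x/s)) ≠ 0 := (Real.exp_pos _).ne'
  have hEM : Real.exp ((M:ℝ)) ≠ 0 := (Real.exp_pos _).ne'
  have hsM : ((s:ℝ)^2)^M ≠ 0 := pow_ne_zero _ (by positivity)
  field_simp

lemma min_integrable (M : ℕ) : Integrable (fun r => min (Gfun M r) (hfun M r)) := by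
  refine Integrable.mono' (hfun_integrable M)
    (((Gfun_measurable M).min (hfun_continuous M).measurable).aestronglyMeasurable)
    (ae_of_all _ fun r => ?_)
  rw [Real.norm_eq_abs, abs_of_nonneg (le_min (Gfun_nonneg M r) (hfun_nonneg M r))]
  exact min_le_right _ _

lemma phi_integral : ∫ x : ℝ, Real.sqrt (2/Real.pi) * Real.exp (-2*x^2) = 1 := by
  rw [integral_const_mul, integral_gaussian, ← Real.sqrt_mul (by positivity),
    show (2/Real.pi)*(Real.pi/2) = 1 from by field_simp, Real.sqrt_one]

lemma phi_integrable : Integrable (fun x : ℝ => Real.sqrt (2/Real.pi) * Real.exp (-2*x^2)) :=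
  (integrable_exp_neg_mul_sq two_pos).const_mul _

lemma minlim : Tendsto (fun M : ℕ => ∫ r, min (Gfun M r) (hfun M r)) atTop (𝓝 1) := by
  have htrans : ∀ M : ℕ, ∫ r, min (Gfun M r) (hfun M r)
      = ∫ x, min (Gfun M (Real.sqrt M + x)) (Real.sqrt (2/Real.pi) * Real.exp (-2*x^2)) := by
    intro M
    rw [← integral_add_left_eq_self (fun r => min (Gfun M r) (hfun M r)) (Real.sqrt M)]
    congr 1
    funext x
    have : hfun M (Real.sqrt M + x) = Real.sqrt (2/Real.pi) * Real.exp (-2*x^2) := by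
      unfold hfun
      rw [show (Real.sqrt M - (Real.sqrt M + x)) = -x from by ring, neg_sq]
    rw [this]
  have key : Tendsto (fun M : ℕ =>
      ∫ x, min (Gfun M (Real.sqrt M + x)) (Real.sqrt (2/Real.pi) * Real.exp (-2*x^2))) atTop
      (𝓝 (∫ x : ℝ, Real.sqrt (2/Real.pi) * Real.exp (-2*x^2))) := by
    refine tendsto_integral_of_dominated_convergence
      (fun x => Real.sqrt (2/Real.pi) * Real.exp (-2*x^2)) ?_ phi_integrable ?_ ?_
    · intro M
      exact (((Gfun_measurable M).comp (measurable_id.const_add (Real.sqrt M))).min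
        (by fun_prop)).aestronglyMeasurable
    · intro M
      refine ae_of_all _ fun x => ?_
      rw [Real.norm_eq_abs, abs_of_nonneg (le_min (Gfun_nonneg M _) (by positivity))]
      exact min_le_right _ _
    · refine ae_of_all _ fun x => ?_
      have := (pointlim x).min (tendsto_const_nhds
        (x := Real.sqrt (2/Real.pi) * Real.exp (-2*x^2)))
      rwa [min_self] at this
  rw [show (1:ℝ) = ∫ x : ℝ, Real.sqrt (2/Real.pi) * Real.exp (-2*x^2) from phi_integral.symm]
  exact (funext htrans ▸ key)

lemma distlim : Tendsto (fun M : ℕ => ∫ r, |Gfun M r - hfun M r|) atTop (𝓝 0) := by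
  have hint : ∀ M : ℕ, ∫ r, |Gfun M r - hfun M r|
      = 2 - 2 * ∫ r, min (Gfun M r) (hfun M r) := by
    intro M
    have habs : (fun r => |Gfun M r - hfun M r|)
        = fun r => (Gfun M r + hfun M r) - 2 * min (Gfun M r) (hfun M r) :=
      funext fun r => abs_sub_min' _ _
    have hf : Integrable (fun r => Gfun M r + hfun M r) :=
      (Gfun_integrable M).add (hfun_integrable M)
    have hg : Integrable (fun r => 2 * min (Gfun M r) (hfun M r)) :=
      (min_integrable M).const_mul 2
    rw [habs, integral_sub hf hg, integral_add (Gfun_integrable M) (hfun_integrable M),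
      Gfun_integral, hfun_integral, integral_const_mul]
    ring
  have := (tendsto_const_nhds (x := (2:ℝ))).sub (minlim.const_mul 2)
  rw [show (2:ℝ) - 2 * 1 = 0 from by norm_num] at this
  exact (funext hint ▸ this)

noncomputable def Kfun (M : ℕ) : ℝ → ℝ := (Set.Ioi (0:ℝ)).indicator (hfun M)

lemma Kfun_nonneg (M : ℕ) (r : ℝ) : 0 ≤ Kfun M r :=
  Set.indicator_nonneg (fun x _ => hfun_nonneg M x) r

lemma Kfun_integrable (M : ℕ) : Integrable (Kfun M) :=
  (integrable_indicator_iff measurableSet_Ioi).mpr (hfun_integrable M).integrableOn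

lemma Kfun_integral_le (M : ℕ) : ∫ r, Kfun M r ≤ 1 := by
  unfold Kfun
  rw [integral_indicator measurableSet_Ioi]
  exact (setIntegral_le_integral (hfun_integrable M)
    (ae_of_all _ fun r => hfun_nonneg M r)).trans_eq (hfun_integral M)

lemma GK_dist_le (M : ℕ) : ∫ r, |Gfun M r - Kfun M r| ≤ ∫ r, |Gfun M r - hfun M r| := by
  refine integral_mono_of_nonneg (ae_of_all _ fun r => abs_nonneg _)
    ((Gfun_integrable M).sub (hfun_integrable M)).abs (ae_of_all _ fun r => ?_)
  show |Gfun M r - Kfun M r| ≤ |Gfun M r - hfun M r|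
  by_cases hr : r ∈ Set.Ioi (0:ℝ)
  · unfold Kfun; rw [indicator_of_mem hr]
  · unfold Kfun Gfun
    rw [indicator_of_notMem hr, indicator_of_notMem hr, sub_zero, zero_sub, abs_neg, abs_zero]
    exact abs_nonneg _

/-- With `g(m,r) = 2 r^{2m+1} e^{−r²}/m!` and
`H(x₁,…,x_k) = (2/π)^{k/2} e^{−2(x₁²+⋯+x_k²)}`, for every `ε > 0` there is `N` such that
whenever all `m_i > N`,
`∫_{(0,∞)^k} |∏ᵢ g(mᵢ,rᵢ) − H(√m₁ − r₁,…,√m_k − r_k)| dr < ε`. -/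
theorem stmt13 (k : ℕ) (ε : ℝ) (hε : 0 < ε) :
    ∃ N : ℕ, ∀ m : Fin k → ℕ, (∀ i, N < m i) →
      (∫ r in Set.univ.pi fun _ : Fin k => Set.Ioi (0 : ℝ),
          |(∏ i, 2 * r i ^ (2 * m i + 1) * Real.exp (-(r i) ^ 2) / ((m i).factorial : ℝ)) -
            (2 / Real.pi) ^ ((k : ℝ) / 2) *
              Real.exp (-2 * ∑ i, (Real.sqrt (m i) - r i) ^ 2)|)
        < ε := by
  set ε' : ℝ := ε / ((k+1) * 2^k) with hε'def
  have hε' : 0 < ε' := by positivity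
  obtain ⟨N, hN⟩ := eventually_atTop.mp (distlim.eventually (gt_mem_nhds hε'))
  refine ⟨N, fun m hm => ?_⟩
  have hdist : ∀ i : Fin k, ∫ r, |Gfun (m i) r - Kfun (m i) r| < ε' :=
    fun i => lt_of_le_of_lt (GK_dist_le (m i)) (hN (m i) (hm i).le)
  -- rewrite the set integral as a full-space integral of |∏ G - ∏ K|
  have hset : MeasurableSet (Set.univ.pi fun _ : Fin k => Set.Ioi (0:ℝ)) :=
    MeasurableSet.univ_pi fun _ => measurableSet_Ioi
  rw [← integral_indicator hset]
  have hfeq : (Set.univ.pi fun _ : Fin k => Set.Ioi (0:ℝ)).indicator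
      (fun r : Fin k → ℝ =>
        |(∏ i, 2 * r i ^ (2 * m i + 1) * Real.exp (-(r i) ^ 2) / ((m i).factorial : ℝ)) -
          (2 / Real.pi) ^ ((k : ℝ) / 2) * Real.exp (-2 * ∑ i, (Real.sqrt (m i) - r i) ^ 2)|)
      = fun r : Fin k → ℝ => |(∏ i, Gfun (m i) (r i)) - ∏ i, Kfun (m i) (r i)| := by
    funext r
    by_cases hr : r ∈ Set.univ.pi fun _ : Fin k => Set.Ioi (0:ℝ)
    · rw [indicator_of_mem hr]
      have hri : ∀ i, r i ∈ Set.Ioi (0:ℝ) := fun i => hr i (Set.mem_univ i)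
      have h1 : (∏ i, Gfun (m i) (r i))
          = ∏ i, 2 * r i ^ (2 * m i + 1) * Real.exp (-(r i) ^ 2) / ((m i).factorial : ℝ) := by
        refine Finset.prod_congr rfl fun i _ => ?_
        unfold Gfun
        rw [indicator_of_mem (hri i)]
        rfl
      have h2 : (∏ i, Kfun (m i) (r i))
          = (2 / Real.pi) ^ ((k : ℝ) / 2) * Real.exp (-2 * ∑ i, (Real.sqrt (m i) - r i) ^ 2) := by
        have h3 : (∏ i, Kfun (m i) (r i)) = ∏ i, hfun (m i) (r i) :=
          Finset.prod_congr rfl fun i _ => by unfold Kfun; rw [indicator_of_mem (hri i)]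
        rw [h3]
        unfold hfun
        rw [Finset.prod_mul_distrib, Finset.prod_const, ← Real.exp_sum, Finset.card_univ,
          Fintype.card_fin]
        congr 1
        · rw [Real.sqrt_eq_rpow, ← Real.rpow_natCast ((2/Real.pi) ^ ((1:ℝ)/2)) k,
            ← Real.rpow_mul (by positivity)]
          congr 1
          ring
        · rw [Finset.mul_sum]
      rw [h1, h2]
    · rw [indicator_of_notMem hr]
      rw [Set.mem_pi] at hr
      push_neg at hr
      obtain ⟨i, _, hi⟩ := hr
      have hG : (∏ i, Gfun (m i) (r i)) = 0 :=
        Finset.prod_eq_zero (Finset.mem_univ i) (by unfold Gfun; rw [indicator_of_notMem hi])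
      have hK : (∏ i, Kfun (m i) (r i)) = 0 :=
        Finset.prod_eq_zero (Finset.mem_univ i) (by unfold Kfun; rw [indicator_of_notMem hi])
      rw [hG, hK, sub_zero, abs_zero]
  rw [hfeq]
  -- bound by sum of products
  set φ : Fin k → Fin k → ℝ → ℝ := fun j i => if i = j
    then (fun x => |Gfun (m i) x - Kfun (m i) x|) else (fun x => Gfun (m i) x + Kfun (m i) x)
    with hφdef
  have hφint : ∀ j i, Integrable (φ j i) := by
    intro j i
    simp only [hφdef]
    by_cases h : i = j
    · rw [if_pos h]; exact ((Gfun_integrable (m i)).sub (Kfun_integrable (m i))).abs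
    · rw [if_neg h]; exact (Gfun_integrable (m i)).add (Kfun_integrable (m i))
  have hsum_int : Integrable (fun x : Fin k → ℝ => ∑ j, ∏ i, φ j i (x i)) :=
    integrable_finset_sum _ fun j _ => Integrable.fintype_prod fun i => hφint j i
  have hpt : ∀ x : Fin k → ℝ, |(∏ i, Gfun (m i) (x i)) - ∏ i, Kfun (m i) (x i)|
      ≤ ∑ j, ∏ i, φ j i (x i) := by
    intro x
    refine (prod_sub_prod_abs_le Finset.univ (fun i => Gfun (m i) (x i))
      (fun i => Kfun (m i) (x i)) (fun i => Gfun_nonneg _ _) (fun i => Kfun_nonneg _ _)).trans ?_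
    refine le_of_eq (Finset.sum_congr rfl fun j _ => ?_)
    rw [← Finset.mul_prod_erase Finset.univ (fun i => φ j i (x i)) (Finset.mem_univ j)]
    congr 1
    · simp [hφdef]
    · refine Finset.prod_congr rfl fun i hi => ?_
      simp only [hφdef, if_neg (Finset.ne_of_mem_erase hi)]
  have hbound : ∫ x : Fin k → ℝ, |(∏ i, Gfun (m i) (x i)) - ∏ i, Kfun (m i) (x i)|
      ≤ ∑ j, ∏ i, ∫ x, φ j i x := by
    refine (integral_mono_of_nonneg (ae_of_all _ fun x => abs_nonneg _) hsum_int
      (ae_of_all _ hpt)).trans (le_of_eq ?_)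
    rw [integral_finset_sum (μ := (volume : Measure (Fin k → ℝ))) _
      fun j _ => Integrable.fintype_prod fun i => hφint j i]
    exact Finset.sum_congr rfl fun j _ => integral_fintype_prod_eq_prod _
  refine lt_of_le_of_lt hbound ?_
  have hterm : ∀ j : Fin k, (∏ i, ∫ x, φ j i x) ≤ ε' * 2^k := by
    intro j
    rw [← Finset.mul_prod_erase Finset.univ (fun i => ∫ x, φ j i x) (Finset.mem_univ j)]
    have h1 : (∫ x, φ j j x) ≤ ε' := by
      have : φ j j = fun x => |Gfun (m j) x - Kfun (m j) x| := by simp [hφdef]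
      rw [this]
      exact (hdist j).le
    have h2 : (∏ i ∈ Finset.univ.erase j, ∫ x, φ j i x) ≤ 2^k := by
      have hle2 : ∀ i ∈ Finset.univ.erase j, (∫ x, φ j i x) ≤ 2 := by
        intro i hi
        have : φ j i = fun x => Gfun (m i) x + Kfun (m i) x := by
          simp [hφdef, if_neg (Finset.ne_of_mem_erase hi)]
        rw [this, integral_add (Gfun_integrable (m i)) (Kfun_integrable (m i)),
          Gfun_integral]
        linarith [Kfun_integral_le (m i)]
      calc (∏ i ∈ Finset.univ.erase j, ∫ x, φ j i x)
          ≤ ∏ _i ∈ Finset.univ.erase j, (2:ℝ) := by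
            refine Finset.prod_le_prod (fun i _ => ?_) hle2
            exact integral_nonneg fun x => by
              by_cases h : i = j
              · subst h; simp only [hφdef, if_pos rfl]; exact abs_nonneg _
              · simp only [hφdef, if_neg h]
                exact add_nonneg (Gfun_nonneg _ _) (Kfun_nonneg _ _)
        _ = (2:ℝ) ^ (Finset.univ.erase j).card := by rw [Finset.prod_const]
        _ ≤ 2^k := by
            refine pow_le_pow_right₀ one_le_two ?_
            exact (Finset.card_le_univ _).trans_eq (by simp)
    have hnn : (0:ℝ) ≤ ∏ i ∈ Finset.univ.erase j, ∫ x, φ j i x := by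
      refine Finset.prod_nonneg fun i _ => integral_nonneg fun x => ?_
      by_cases h : i = j
      · subst h; simp only [hφdef, if_pos rfl]; exact abs_nonneg _
      · simp only [hφdef, if_neg h]
        exact add_nonneg (Gfun_nonneg _ _) (Kfun_nonneg _ _)
    exact mul_le_mul h1 h2 hnn hε'.le
  have hsum : (∑ j : Fin k, ∏ i, ∫ x, φ j i x) ≤ k * (ε' * 2^k) := by
    refine (Finset.sum_le_sum fun j _ => hterm j).trans (le_of_eq ?_)
    rw [Finset.sum_const, Finset.card_univ, Fintype.card_fin, nsmul_eq_mul]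
  refine lt_of_le_of_lt hsum ?_
  rw [hε'def]
  rw [show (k:ℝ) * (ε / ((k+1) * 2^k) * 2^k) = ε * (k / (k+1)) from by
    field_simp]
  have hk : (k:ℝ) / (k+1) < 1 := by
    rw [div_lt_one (by positivity)]
    linarith
  nlinarith
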